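/- The first-kind Nédélec vector polynomial space P⁻_r(Tℝ³) := P_{r-1}(Tℝ³) ⊕ L₁(H_{r-1}(Tℝ³)), where (L₁(Y))^I = ε_{IJL} X^L Y^J, has dimension (1/2) r (r+2)(r+3). -/

import Mathlib

set_option maxHeartbeats 1000000
set_option synthInstance.maxHeartbeats 400000


open MvPolynomial

/-- Levi-Civita permutation symbol on `Fin 3`. -/
noncomputable def levi (i j k : Fin 3) : ℝ :=
  (((j : ℕ) : ℝ) - ((i : ℕ) : ℝ)) * (((k : ℕ) : ℝ) - ((i : ℕ) : ℝ)) *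
    (((k : ℕ) : ℝ) - ((j : ℕ) : ℝ)) / 2

/-- `P_r(Tℝ³)`: ℝ³-valued polynomial maps with components of total degree at most `r`. -/
noncomputable def Pvec (r : ℕ) : Submodule ℝ (Fin 3 → MvPolynomial (Fin 3) ℝ) :=
  Submodule.pi Set.univ fun _ => restrictTotalDegree (Fin 3) ℝ r

/-- `H_r(Tℝ³)`: ℝ³-valued polynomial maps with homogeneous components of degree `r`. -/
noncomputable def Hvec (r : ℕ) : Submodule ℝ (Fin 3 → MvPolynomial (Fin 3) ℝ) :=
  Submodule.pi Set.univ fun _ => homogeneousSubmodule (Fin 3) ℝ r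

/-- The linear map `(L₁(Y))^I = ε_{I J L} X^L Y^J`. -/
noncomputable def L1 : (Fin 3 → MvPolynomial (Fin 3) ℝ) →ₗ[ℝ] (Fin 3 → MvPolynomial (Fin 3) ℝ) where
  toFun Y I := ∑ j : Fin 3, ∑ l : Fin 3, C (levi I j l) * X l * Y j
  map_add' Y Z := by
    funext I
    simp [Pi.add_apply, mul_add, Finset.sum_add_distrib]
  map_smul' c Y := by
    funext I
    simp [Pi.smul_apply, Finset.smul_sum, mul_smul_comm]

/-! ### Auxiliary lemmas -/

lemma L1_apply (Y : Fin 3 → MvPolynomial (Fin 3) ℝ) :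
    L1 Y = ![X 2 * Y 1 - X 1 * Y 2, X 0 * Y 2 - X 2 * Y 0, X 1 * Y 0 - X 0 * Y 1] := by
  funext I
  fin_cases I <;>
  · show ∑ j : Fin 3, ∑ l : Fin 3, C (levi _ j l) * X l * Y j = _
    rw [Fin.sum_univ_three]
    simp only [Fin.sum_univ_three, levi]
    norm_num
    ring

lemma prime_X0 : Prime (X 0 : MvPolynomial (Fin 3) ℝ) := by
  rw [← MulEquiv.prime_iff (finSuccEquiv ℝ 2).toMulEquiv]
  show Prime (finSuccEquiv ℝ 2 (X 0))
  rw [finSuccEquiv_X_zero]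
  exact Polynomial.prime_X

lemma not_X0_dvd {j : Fin 3} (h : j ≠ 0) : ¬ (X 0 ∣ (X j : MvPolynomial (Fin 3) ℝ)) := by
  intro hdvd
  have := map_dvd (eval (fun k => if k = 0 then (0:ℝ) else 1)) hdvd
  simp [h] at this

lemma exists_of_L1_eq_zero {Y : Fin 3 → MvPolynomial (Fin 3) ℝ} (h : L1 Y = 0) :
    ∃ f, ∀ i, Y i = X i * f := by
  rw [L1_apply] at h
  have h1 : X 0 * Y 2 = X 2 * Y 0 := by
    have := congrFun h 1; simpa [sub_eq_zero] using this
  have h2 : X 1 * Y 0 = X 0 * Y 1 := by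
    have := congrFun h 2; simpa [sub_eq_zero] using this
  have hd : X 0 ∣ Y 0 := by
    rcases (prime_X0.2.2 (X 1) (Y 0) ⟨Y 1, h2⟩) with h' | h'
    · exact absurd h' (not_X0_dvd (by decide))
    · exact h'
  obtain ⟨f, hf⟩ := hd
  refine ⟨f, ?_⟩
  have hX0 : (X 0 : MvPolynomial (Fin 3) ℝ) ≠ 0 := X_ne_zero 0
  have e1 : Y 1 = X 1 * f := by
    apply mul_left_cancel₀ hX0
    rw [← h2, hf]; ring
  have e2 : Y 2 = X 2 * f := by
    apply mul_left_cancel₀ hX0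
    rw [h1, hf]; ring
  intro i
  fin_cases i
  · exact hf
  · exact e1
  · exact e2

lemma isHomog_of_X_mul {f : MvPolynomial (Fin 3) ℝ} {i : Fin 3} {n : ℕ}
    (h : (X i * f).IsHomogeneous (n + 1)) : f.IsHomogeneous n := by
  intro d hd
  have hc : coeff (Finsupp.single i 1 + d) (X i * f) ≠ 0 := by
    rwa [coeff_X_mul]
  have h2 := h hc
  rw [map_add] at h2
  have h3 : (Finsupp.weight 1) (Finsupp.single i (1:ℕ)) = 1 := by
    simp [Finsupp.weight_apply, Finsupp.sum_single_index]
  omega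

/-! ### Counting -/

noncomputable def degreeEquivSym (k : ℕ) :
    {d : Fin 3 →₀ ℕ // d.degree = k} ≃ Sym (Fin 3) k :=
  ((Multiset.toFinsupp (α := Fin 3)).toEquiv.symm).subtypeEquiv (fun d => by
    rw [show (Multiset.toFinsupp (α := Fin 3)).toEquiv.symm d
        = Finsupp.toMultiset d from rfl, Finsupp.card_toMultiset]
    exact Iff.rfl)

instance (k : ℕ) : Finite {d : Fin 3 →₀ ℕ // d.degree = k} :=
  Finite.of_equiv _ (degreeEquivSym k).symm

lemma card_degree_eq (k : ℕ) :
    Nat.card {d : Fin 3 →₀ ℕ // d.degree = k} = (k+2).choose 2 := by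
  rw [Nat.card_congr (degreeEquivSym k), Nat.card_eq_fintype_card,
    Sym.card_sym_eq_choose]
  simp only [Fintype.card_fin]
  rw [show 3 + k - 1 = k + 2 by omega, ← Nat.choose_symm (by omega : 2 ≤ k + 2),
    show k + 2 - 2 = k by omega]

noncomputable def leEquivSigma (m : ℕ) :
    {d : Fin 3 →₀ ℕ // d.degree ≤ m} ≃ Σ k : Fin (m+1), {d : Fin 3 →₀ ℕ // d.degree = k} where
  toFun d := ⟨⟨d.1.degree, Nat.lt_succ_of_le d.2⟩, ⟨d.1, rfl⟩⟩
  invFun x := ⟨x.2.1, by rw [x.2.2]; exact Nat.lt_succ_iff.mp x.1.isLt⟩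
  left_inv d := rfl
  right_inv := by
    rintro ⟨⟨k, hk⟩, d, hd⟩
    simp only [Fin.val_mk] at hd
    subst hd
    rfl

lemma card_le_eq (m : ℕ) :
    Nat.card {d : Fin 3 →₀ ℕ // d.degree ≤ m} = (m+3).choose 3 := by
  letI : ∀ k : Fin (m+1), Fintype {d : Fin 3 →₀ ℕ // d.degree = (k:ℕ)} :=
    fun k => Fintype.ofFinite _
  rw [Nat.card_congr (leEquivSigma m), Nat.card_eq_fintype_card, Fintype.card_sigma]
  simp_rw [← Nat.card_eq_fintype_card]
  have : ∀ k : Fin (m+1), Nat.card {d : Fin 3 →₀ ℕ // d.degree = k} = ((k:ℕ)+2).choose 2 :=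
    fun k => card_degree_eq k
  rw [Finset.sum_congr rfl (fun k _ => this k)]
  rw [Fin.sum_univ_eq_sum_range (fun k => (k+2).choose 2)]
  have h := Nat.sum_Icc_choose (m+2) 2
  rw [← Finset.Ico_add_one_right_eq_Icc, Finset.sum_Ico_eq_sum_range] at h
  simp only [show m + 2 + 1 - 2 = m + 1 by omega] at h
  rw [show (m+3).choose 3 = (m+2+1).choose (2+1) by norm_num]
  rw [← h]
  apply Finset.sum_congr rfl
  intro k _
  rw [Nat.add_comm 2 k]

lemma finrank_homog (k : ℕ) :
    Module.finrank ℝ (homogeneousSubmodule (Fin 3) ℝ k) = (k+2).choose 2 := by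
  rw [homogeneousSubmodule_eq_finsupp_supported]
  exact (Module.finrank_eq_nat_card_basis
    (basisRestrictSupport ℝ {d | d.degree = k})).trans (card_degree_eq k)

lemma finrank_rtd (m : ℕ) :
    Module.finrank ℝ (restrictTotalDegree (Fin 3) ℝ m) = (m+3).choose 3 :=
  (Module.finrank_eq_nat_card_basis
    (basisRestrictSupport ℝ { n | (n.sum fun _ e => e) ≤ m })).trans (card_le_eq m)

def piSubEquiv {ι R M : Type*} [Fintype ι] [CommRing R] [AddCommGroup M] [Module R M]
    (p : ι → Submodule R M) :
    (Submodule.pi Set.univ p) ≃ₗ[R] ((i : ι) → p i) where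
  toFun x i := ⟨x.1 i, x.2 i trivial⟩
  map_add' _ _ := rfl
  map_smul' _ _ := rfl
  invFun x := ⟨fun i => x i, fun i _ => (x i).2⟩
  left_inv _ := rfl
  right_inv _ := rfl

lemma homog_le_rtd (k : ℕ) :
    homogeneousSubmodule (Fin 3) ℝ k ≤ restrictTotalDegree (Fin 3) ℝ k :=
  fun p hp => (mem_restrictTotalDegree _ _ _).mpr hp.totalDegree_le

instance (k : ℕ) : FiniteDimensional ℝ (homogeneousSubmodule (Fin 3) ℝ k) :=
  Submodule.finiteDimensional_of_le (homog_le_rtd k)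

instance (k : ℕ) : FiniteDimensional ℝ (Hvec k) :=
  Module.Finite.equiv (piSubEquiv _).symm

instance (k : ℕ) : FiniteDimensional ℝ (Pvec k) :=
  Module.Finite.equiv (piSubEquiv _).symm

lemma finrank_Hvec (k : ℕ) : Module.finrank ℝ (Hvec k) = 3 * (k+2).choose 2 := by
  rw [show Module.finrank ℝ (Hvec k)
      = Module.finrank ℝ ((i : Fin 3) → homogeneousSubmodule (Fin 3) ℝ k) from
    LinearEquiv.finrank_eq (piSubEquiv _), Module.finrank_pi_fintype]
  simp [finrank_homog]

lemma finrank_Pvec (k : ℕ) : Module.finrank ℝ (Pvec k) = 3 * (k+3).choose 3 := by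
  rw [show Module.finrank ℝ (Pvec k)
      = Module.finrank ℝ ((i : Fin 3) → restrictTotalDegree (Fin 3) ℝ k) from
    LinearEquiv.finrank_eq (piSubEquiv _), Module.finrank_pi_fintype]
  simp [finrank_rtd]

/-! ### Image of `L1` is homogeneous of one degree higher -/

lemma L1_mem_Hvec {m : ℕ} {Y : Fin 3 → MvPolynomial (Fin 3) ℝ} (hY : Y ∈ Hvec m) :
    L1 Y ∈ Hvec (m + 1) := by
  intro I _
  show (∑ j : Fin 3, ∑ l : Fin 3, C (levi I j l) * X l * Y j) ∈ _
  apply Submodule.sum_mem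
  intro j _
  apply Submodule.sum_mem
  intro l _
  show (C (levi I j l) * X l * Y j).IsHomogeneous (m + 1)
  have : (0 : ℕ) + 1 + m = m + 1 := by omega
  exact this ▸ ((isHomogeneous_C _ _).mul (isHomogeneous_X _ _)).mul (hY j trivial)

/-! ### Kernel of `L1` on `Hvec m` -/

noncomputable def kerMap (m : ℕ) :
    homogeneousSubmodule (Fin 3) ℝ m →ₗ[ℝ]
      LinearMap.ker (L1.domRestrict (Hvec (m + 1))) where
  toFun f := ⟨⟨fun i => X i * f.1, fun i _ => by
      have h := (isHomogeneous_X ℝ i).mul f.2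
      rwa [Nat.add_comm] at h⟩, by
      rw [LinearMap.mem_ker, LinearMap.domRestrict_apply]
      show L1 (fun i => X i * f.1) = 0
      rw [L1_apply]
      funext I
      fin_cases I <;>
      · show _ - _ = (0:MvPolynomial (Fin 3) ℝ)
        ring⟩
  map_add' f g := by
    apply Subtype.ext; apply Subtype.ext
    funext i
    show X i * (f.1 + g.1) = X i * f.1 + X i * g.1
    ring
  map_smul' c f := by
    apply Subtype.ext; apply Subtype.ext
    funext i
    show X i * (c • f.1) = c • (X i * f.1)
    rw [smul_eq_C_mul, smul_eq_C_mul]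
    ring

lemma kerMap_bijective (m : ℕ) : Function.Bijective (kerMap m) := by
  constructor
  · intro f g hfg
    apply Subtype.ext
    have h2 : X 0 * (f : MvPolynomial (Fin 3) ℝ) = X 0 * (g : MvPolynomial (Fin 3) ℝ) :=
      congrArg (fun z => (z.1.1 : Fin 3 → MvPolynomial (Fin 3) ℝ) 0) hfg
    exact mul_left_cancel₀ (X_ne_zero 0) h2
  · rintro ⟨x, hker⟩
    rw [LinearMap.mem_ker, LinearMap.domRestrict_apply] at hker
    obtain ⟨f, hf⟩ := exists_of_L1_eq_zero hker
    have hx0 : ((x : Fin 3 → MvPolynomial (Fin 3) ℝ) 0).IsHomogeneous (m + 1) :=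
      x.2 0 trivial
    rw [hf 0] at hx0
    have hfh : f.IsHomogeneous m := isHomog_of_X_mul hx0
    refine ⟨⟨f, hfh⟩, ?_⟩
    apply Subtype.ext; apply Subtype.ext
    funext i
    exact (hf i).symm

lemma finrank_ker_succ (m : ℕ) :
    Module.finrank ℝ (LinearMap.ker (L1.domRestrict (Hvec (m + 1)))) = (m+2).choose 2 := by
  rw [← LinearEquiv.finrank_eq (LinearEquiv.ofBijective (kerMap m) (kerMap_bijective m))]
  exact finrank_homog m

lemma ker_zero : LinearMap.ker (L1.domRestrict (Hvec 0)) = ⊥ := by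
  rw [LinearMap.ker_eq_bot']
  intro x hker
  rw [LinearMap.domRestrict_apply] at hker
  obtain ⟨f, hf⟩ := exists_of_L1_eq_zero hker
  have hY0 : (x : Fin 3 → MvPolynomial (Fin 3) ℝ) 0 = 0 := by
    ext d
    rw [coeff_zero]
    by_contra hc
    have hd : d = 0 := by
      have h0 : ((x : Fin 3 → MvPolynomial (Fin 3) ℝ) 0).IsHomogeneous 0 := x.2 0 trivial
      have := h0 hc
      change Finsupp.weight (fun _ => 1) d = 0 at this; rw [← Finsupp.degree_eq_weight_one (R := ℕ)] at this
      exact (Finsupp.degree_eq_zero_iff d).mp this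
    subst hd
    rw [hf 0] at hc
    apply hc
    have hcc : constantCoeff (X (0 : Fin 3) * f) = 0 := by simp
    simpa [constantCoeff_eq] using hcc
  have hf0 : f = 0 := by
    have hx : X (0 : Fin 3) * f = 0 := by rw [← hf 0, hY0]
    rcases mul_eq_zero.mp hx with h | h
    · exact absurd h (X_ne_zero 0)
    · exact h
  apply Subtype.ext
  funext i
  rw [show ((0 : Hvec 0) : Fin 3 → MvPolynomial (Fin 3) ℝ) i = 0 from rfl,
    hf i, hf0, mul_zero]

/-! ### Numerical identities -/

lemma two_mul_choose_two (n : ℕ) : 2 * (n+1).choose 2 = (n+1) * n := by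
  induction n with
  | zero => rfl
  | succ k ih =>
    rw [show k+1+1 = (k+1)+1 from rfl, Nat.choose_succ_succ (k+1) 1]
    simp only [Nat.choose_one_right]
    zify at ih ⊢
    push_cast at ih ⊢
    linear_combination ih

lemma six_mul_choose_three (n : ℕ) : 6 * (n+3).choose 3 = (n+1) * (n+2) * (n+3) := by
  induction n with
  | zero => rfl
  | succ k ih =>
    have h2 := two_mul_choose_two (k+2)
    rw [show k+1+3 = (k+3)+1 from rfl, Nat.choose_succ_succ (k+3) 2,
      show k + 3 = (k+2)+1 from rfl]
    zify at ih h2 ⊢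
    push_cast at ih h2 ⊢
    linear_combination ih + 3 * h2

/-! ### Main theorem -/

theorem dim_nedelec_first_kind (r : ℕ) (hr : 1 ≤ r) :
    Disjoint (Pvec (r - 1)) ((Hvec (r - 1)).map L1) ∧
      2 * Module.finrank ℝ ↥(Pvec (r - 1) ⊔ (Hvec (r - 1)).map L1) =
        r * (r + 2) * (r + 3) := by
  obtain ⟨m, rfl⟩ : ∃ m, r = m + 1 := ⟨r - 1, by omega⟩
  rw [show m + 1 - 1 = m by omega]
  -- disjointness
  have hdisj : Disjoint (Pvec m) ((Hvec m).map L1) := by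
    rw [Submodule.disjoint_def]
    rintro x hxP hxI
    obtain ⟨Y, hY, rfl⟩ := hxI
    have hhom := L1_mem_Hvec hY
    funext i
    by_cases h0 : L1 Y i = 0
    · exact h0
    · exfalso
      have h1 : (L1 Y i).totalDegree = m + 1 := (hhom i trivial).totalDegree h0
      have h2 : (L1 Y i).totalDegree ≤ m := (mem_restrictTotalDegree _ _ _).mp (hxP i trivial)
      omega
  refine ⟨hdisj, ?_⟩
  -- dimension count
  haveI : FiniteDimensional ℝ ((Hvec m).map L1) := Module.Finite.map _ _
  have hsum := Submodule.finrank_sup_add_finrank_inf_eq (Pvec m) ((Hvec m).map L1)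
  rw [disjoint_iff.mp hdisj, finrank_bot, Nat.add_zero] at hsum
  have hrange := LinearMap.finrank_range_add_finrank_ker (L1.domRestrict (Hvec m))
  rw [LinearMap.range_domRestrict] at hrange
  have hker : Module.finrank ℝ (LinearMap.ker (L1.domRestrict (Hvec m))) = (m+1).choose 2 := by
    cases m with
    | zero => rw [ker_zero, finrank_bot]; rfl
    | succ k => exact finrank_ker_succ k
  rw [hker, finrank_Hvec] at hrange
  rw [hsum, finrank_Pvec]
  have hA := six_mul_choose_three m
  have hB := two_mul_choose_two (m+1)
  have hK := two_mul_choose_two m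
  zify at hrange hA hB hK ⊢
  push_cast at hrange hA hB hK ⊢
  linear_combination hA + 3 * hB - hK + 2 * hrange
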